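/- For every integer d ≥ 1 there exists a constant c > 0 such that for all integers m ≥ 1 and n ≥ 2dm there exist finitely many closed halfspaces in ℝ^d, at most n in total, each assigned one of m colors, such that, letting P_j be the intersection of the halfspaces of color j, the set of vertices of the subdivision induced by P_1, …, P_m has cardinality at least c · m^⌈d/2⌉ · n^⌊d/2⌋. -/
import Mathlib
set_option maxHeartbeats 1000000


open Set

/-- A closed halfspace: `{x | f x ≤ a}` for a nonzero linear functional `f`. -/
def IsClosedHalfspace (V : Type*) [AddCommGroup V] [Module ℝ V] (h : Set V) : Prop :=
  ∃ (f : V →ₗ[ℝ] ℝ) (a : ℝ), f ≠ 0 ∧ h = {x | f x ≤ a}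

/-- A convex polyhedron: the intersection of finitely many closed halfspaces. -/
def IsPolyhedron (V : Type*) [AddCommGroup V] [Module ℝ V] (P : Set V) : Prop :=
  ∃ (k : ℕ) (H : Fin k → Set V), (∀ i, IsClosedHalfspace V (H i)) ∧ P = ⋂ i, H i

/-- `minFace P p` is the intersection of `P` with all hyperplanes `{x | f x = a}`
(`f` a nonzero linear functional) such that `f p = a` and `P ⊆ {x | f x ≤ a}`;
this is the face `F(p)` of `P` at `p`.  If there is no such hyperplane, it is `P`. -/
def minFace {V : Type*} [AddCommGroup V] [Module ℝ V] (P : Set V) (p : V) : Set V :=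
  P ∩ ⋂ (f : V →ₗ[ℝ] ℝ) (a : ℝ) (_ : f ≠ 0) (_ : f p = a) (_ : P ⊆ {x | f x ≤ a}),
    {x | f x = a}

/-- `p` is a vertex of the subdivision induced by the polyhedra `P j`:
the intersection of the faces `minFace (P j) p`, over all `j` with `p ∈ P j`,
equals `{p}`. -/
def IsSubdivVertex {V : Type*} [AddCommGroup V] [Module ℝ V] {ι : Type*}
    (P : ι → Set V) (p : V) : Prop :=
  (⋂ j ∈ {j | p ∈ P j}, minFace (P j) p) = {p}

section General
variable {V : Type*} [AddCommGroup V] [Module ℝ V]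

lemma mem_minFace_self {P : Set V} {p : V} (hp : p ∈ P) : p ∈ minFace P p := by
  refine ⟨hp, ?_⟩
  simp only [Set.mem_iInter]
  exact fun f a _ hfa _ => hfa

lemma minFace_subset_eq {P : Set V} {p : V} {f : V →ₗ[ℝ] ℝ} {a : ℝ}
    (hf : f ≠ 0) (hfp : f p = a) (hP : P ⊆ {x | f x ≤ a}) :
    minFace P p ⊆ {x | f x = a} := by
  intro x hx
  have := hx.2
  simp only [Set.mem_iInter] at this
  exact this f a hf hfp hP

lemma isSubdivVertex_of_pinned {ι : Type*} {P : ι → Set V} {p : V}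
    {L : Type*} [Nonempty L] (F : L → (V →ₗ[ℝ] ℝ)) (A : L → ℝ) (C : L → ι)
    (hne : ∀ l, F l ≠ 0) (hmem : ∀ l, p ∈ P (C l))
    (hsub : ∀ l, P (C l) ⊆ {x | F l x ≤ A l}) (htight : ∀ l, F l p = A l)
    (huniq : ∀ x : V, (∀ l, F l x = A l) → x = p) :
    IsSubdivVertex P p := by
  apply Set.eq_singleton_iff_unique_mem.2
  constructor
  · simp only [Set.mem_iInter, Set.mem_setOf_eq]
    intro j hj
    exact mem_minFace_self hj
  · intro x hx
    simp only [Set.mem_iInter, Set.mem_setOf_eq] at hx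
    refine huniq x fun l => ?_
    exact minFace_subset_eq (hne l) (htight l) (hsub l) (hx (C l) (hmem l))

/-- perturbation lemma: membership in minFace from tightness transfer -/
lemma mem_minFace_of_tight {N : ℕ} (f : Fin N → (V →ₗ[ℝ] ℝ)) (a : Fin N → ℝ)
    (T : Set (Fin N)) {p q : V}
    (hp : p ∈ ⋂ i ∈ T, {x | f i x ≤ a i}) (hq : q ∈ ⋂ i ∈ T, {x | f i x ≤ a i})
    (htr : ∀ i ∈ T, f i p = a i → f i q = a i) :
    q ∈ minFace (⋂ i ∈ T, {x | f i x ≤ a i}) p := by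
  classical
  set P : Set V := ⋂ i ∈ T, {x | f i x ≤ a i} with hPdef
  have hmemP : ∀ {x : V}, x ∈ P → ∀ i ∈ T, f i x ≤ a i := by
    intro x hx i hi
    have := Set.mem_iInter₂.1 hx i hi
    exact this
  refine ⟨hq, ?_⟩
  simp only [Set.mem_iInter]
  intro g b hg hgp hPg
  -- choose ε
  set r : Fin N → ℝ := fun i =>
    if f i p < a i then (a i - f i p) / (|f i p - f i q| + 1) else 1 with hr
  have hrpos : ∀ i, 0 < r i := by
    intro i
    simp only [hr]
    split_ifs with h
    · apply div_pos (by linarith) (by positivity)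
    · norm_num
  set ε : ℝ := (insert (1:ℝ) (Finset.univ.image r)).min' (Finset.insert_nonempty _ _) with he
  have hεle : ∀ i, ε ≤ r i := by
    intro i
    apply Finset.min'_le
    exact Finset.mem_insert_of_mem (Finset.mem_image_of_mem _ (Finset.mem_univ i))
  have hεpos : 0 < ε := by
    apply lt_of_lt_of_le ?_ (le_refl ε)
    have := Finset.min'_mem (insert (1:ℝ) (Finset.univ.image r)) (Finset.insert_nonempty _ _)
    rw [← he] at this
    rcases Finset.mem_insert.1 this with h | h
    · rw [h]; norm_num
    · rcases Finset.mem_image.1 h with ⟨i, _, hi⟩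
      rw [← hi]; exact hrpos i
  -- y ∈ P
  have hy : p + ε • (p - q) ∈ P := by
    apply Set.mem_iInter₂.2
    intro i hi
    have hfy : f i (p + ε • (p - q)) = f i p + ε * (f i p - f i q) := by
      simp only [map_add, map_smul, map_sub, smul_eq_mul]
    show f i (p + ε • (p - q)) ≤ a i
    rw [hfy]
    by_cases hti : f i p < a i
    · have hre : r i = (a i - f i p) / (|f i p - f i q| + 1) := by simp [hr, hti]
      have h1 : ε ≤ (a i - f i p) / (|f i p - f i q| + 1) := hre ▸ hεle i
      have h2 : f i p - f i q ≤ |f i p - f i q| := le_abs_self _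
      have h3 : (0:ℝ) ≤ |f i p - f i q| := abs_nonneg _
      have h4 : ε * (f i p - f i q) ≤ a i - f i p := by
        rcases le_or_gt (f i p - f i q) 0 with hD | hD
        · nlinarith
        · have : ε * (f i p - f i q) ≤ ((a i - f i p) / (|f i p - f i q| + 1)) * (f i p - f i q) := by
            apply mul_le_mul_of_nonneg_right h1 (le_of_lt hD)
          calc ε * (f i p - f i q) ≤ ((a i - f i p) / (|f i p - f i q| + 1)) * (f i p - f i q) := this
            _ ≤ a i - f i p := by
                rw [div_mul_eq_mul_div, div_le_iff₀ (by positivity)]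
                nlinarith
      linarith
    · push_neg at hti
      have h1 : f i p ≤ a i := hmemP hp i hi
      have h2 : f i p = a i := le_antisymm h1 hti
      have h3 : f i q = a i := htr i hi h2
      rw [h2, h3]
      simp
  -- conclude
  have h5 : g (p + ε • (p - q)) ≤ b := hPg hy
  have h6 : g (p + ε • (p - q)) = g p + ε * (g p - g q) := by
    simp only [map_add, map_smul, map_sub, smul_eq_mul]
  have h7 : g q ≤ b := hPg hq
  have h8 : g p = b := hgp
  show g q = b
  rw [h6, h8] at h5
  nlinarith

lemma subdivVertex_finite {N m : ℕ} (f : Fin N → (V →ₗ[ℝ] ℝ)) (a : Fin N → ℝ)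
    (color : Fin N → Fin m) :
    {p : V | IsSubdivVertex (fun j => ⋂ i ∈ {i | color i = j}, {x | f i x ≤ a i}) p}.Finite := by
  classical
  set P : Fin m → Set V := fun j => ⋂ i ∈ {i | color i = j}, {x | f i x ≤ a i} with hP
  set Φ : V → (Fin N → Prop) × (Fin m → Prop) :=
    fun p => (fun i => f i p = a i, fun j => p ∈ P j) with hΦ
  have key : Set.InjOn Φ {p : V | IsSubdivVertex P p} := by
    intro p hp q hq hpq
    have h1 : ∀ i, (f i p = a i) = (f i q = a i) := fun i => congrFun (congrArg Prod.fst hpq) i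
    have h2 : ∀ j, (p ∈ P j) = (q ∈ P j) := fun j => congrFun (congrArg Prod.snd hpq) j
    have hp' : (⋂ j ∈ {j | p ∈ P j}, minFace (P j) p) = {p} := hp
    by_cases hJ : ∃ j, p ∈ P j
    · -- q in every minFace (P j) p for j with p ∈ P j
      have hq' : q ∈ ⋂ j ∈ {j | p ∈ P j}, minFace (P j) p := by
        apply Set.mem_iInter₂.2
        intro j hj
        have hqj : q ∈ P j := (h2 j) ▸ hj
        exact mem_minFace_of_tight f a {i | color i = j} hj hqj
          (fun i _ hi => (h1 i) ▸ hi)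
      rw [hp'] at hq'
      exact hq'.symm
    · push_neg at hJ
      have hJq : ∀ j, q ∉ P j := fun j => (h2 j) ▸ hJ j
      have e1 : ({j | p ∈ P j} : Set (Fin m)) = ∅ := by ext j; simp [hJ j]
      have e2 : ({j | q ∈ P j} : Set (Fin m)) = ∅ := by ext j; simp [hJq j]
      have hq' : (⋂ j ∈ {j | q ∈ P j}, minFace (P j) q) = {q} := hq
      rw [e1] at hp'
      rw [e2] at hq'
      simp at hp' hq'
      have : ({p} : Set V) = {q} := hp'.symm.trans hq'
      exact Set.singleton_eq_singleton_iff.1 this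
  exact Set.Finite.of_finite_image (Set.toFinite _) key

end General


namespace SLB

noncomputable def prj (d : ℕ) (i : Fin d) : (Fin d → ℝ) →ₗ[ℝ] ℝ :=
  LinearMap.proj (R := ℝ) (φ := fun _ : Fin d => ℝ) i

@[simp] lemma prj_apply (d : ℕ) (i : Fin d) (x : Fin d → ℝ) : prj d i x = x i := rfl

-- ε and shifted slopes
noncomputable def eps (m : ℕ) : ℝ := 1 / (2 * m)
noncomputable def sv (m t j : ℕ) : ℝ := (t : ℝ) + (j : ℝ) * eps m

lemma eps_pos {m : ℕ} (hm : 1 ≤ m) : 0 < eps m := by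
  have : (0:ℝ) < (m:ℕ) := by exact_mod_cast hm
  unfold eps; positivity

lemma eps_bound {m : ℕ} (hm : 1 ≤ m) {j : ℕ} (hj : j < m) :
    0 ≤ (j:ℝ) * eps m ∧ (j:ℝ) * eps m < 1/2 := by
  have h0 : (0:ℝ) < m := by exact_mod_cast hm
  have h1 : (j:ℝ) < m := by exact_mod_cast hj
  have h2 : (0:ℝ) ≤ (j:ℝ) := Nat.cast_nonneg j
  constructor
  · have := le_of_lt (eps_pos hm); positivity
  · unfold eps
    rw [mul_one_div, div_lt_iff₀ (by positivity)]
    nlinarith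

def zz {m : ℕ} (j k : Fin m) : ℕ := if j = k then 1 else 0

/-- The core 2-D inequality. -/
lemma core_ineq {m : ℕ} (hm : 1 ≤ m) (j k c : Fin m) (t u : ℕ)
    (hjk : (j:ℕ) ≤ (k:ℕ)) (hok : (c:ℕ) ≤ (j:ℕ) ∨ (k:ℕ) ≤ (c:ℕ))
    (hdeg : j = k → c = j) :
    0 ≤ (sv m u c - sv m t j) * (sv m u c - sv m (t + zz j k) k) := by
  have hj := eps_bound hm j.isLt
  have hk := eps_bound hm k.isLt
  have hc := eps_bound hm c.isLt
  by_cases hq : j = k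
  · have hcj : c = j := hdeg hq
    subst hcj; subst hq
    simp only [zz, if_pos rfl, sv]
    push_cast
    rcases le_or_gt u t with h | h
    · have h1 : (u:ℝ) ≤ (t:ℝ) := by exact_mod_cast h
      nlinarith
    · have h1 : (t:ℝ) + 1 ≤ (u:ℝ) := by exact_mod_cast h
      nlinarith
  · have hq' : (j:ℕ) < (k:ℕ) := lt_of_le_of_ne hjk (fun h => hq (Fin.ext h))
    simp only [zz, if_neg hq, Nat.add_zero, sv]
    have hcj : ((c:ℕ):ℝ) ≤ j ∨ ((k:ℕ):ℝ) ≤ (c:ℕ) := by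
      rcases hok with h | h
      · left; exact_mod_cast h
      · right; exact_mod_cast h
    rcases Nat.lt_trichotomy u t with h | h | h
    · have h1 : (u:ℝ) + 1 ≤ (t:ℝ) := by exact_mod_cast h
      have F1 : (u:ℝ) + (c:ℝ) * eps m - ((t:ℝ) + (j:ℝ) * eps m) < 0 := by
        linarith [hj.1, hc.2]
      have F2 : (u:ℝ) + (c:ℝ) * eps m - ((t:ℝ) + (k:ℝ) * eps m) < 0 := by
        linarith [hk.1, hc.2]
      exact le_of_lt (mul_pos_of_neg_of_neg F1 F2)
    · subst h
      have he := le_of_lt (eps_pos hm)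
      rcases hcj with h | h
      · have hjk' : (j:ℝ) ≤ (k:ℝ) := by exact_mod_cast hjk
        have F1 : ((u:ℝ) + (c:ℝ) * eps m) - ((u:ℝ) + (j:ℝ) * eps m) ≤ 0 := by nlinarith
        have F2 : ((u:ℝ) + (c:ℝ) * eps m) - ((u:ℝ) + (k:ℝ) * eps m) ≤ 0 := by nlinarith
        exact mul_nonneg_of_nonpos_of_nonpos F1 F2
      · have hjk' : (j:ℝ) ≤ (k:ℝ) := by exact_mod_cast hjk
        have F1 : ((u:ℝ) + (c:ℝ) * eps m) - ((u:ℝ) + (j:ℝ) * eps m) ≥ 0 := by nlinarith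
        have F2 : ((u:ℝ) + (c:ℝ) * eps m) - ((u:ℝ) + (k:ℝ) * eps m) ≥ 0 := by nlinarith
        exact mul_nonneg F1 F2
    · have h1 : (t:ℝ) + 1 ≤ (u:ℝ) := by exact_mod_cast h
      have F1 : (0:ℝ) < (u:ℝ) + (c:ℝ) * eps m - ((t:ℝ) + (j:ℝ) * eps m) := by
        linarith [hj.2, hc.1]
      have F2 : (0:ℝ) < (u:ℝ) + (c:ℝ) * eps m - ((t:ℝ) + (k:ℝ) * eps m) := by
        linarith [hk.2, hc.1]
      exact le_of_lt (mul_pos F1 F2)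

variable (d m K : ℕ)

/-- index of the constraints: color, then block-edge or odd-coordinate -/
abbrev Idx := Fin m × (Fin (d/2) × Fin K ⊕ Fin (d % 2))

/-- linear functional of a constraint -/
noncomputable def cf (c : Idx d m K) : (Fin d → ℝ) →ₗ[ℝ] ℝ :=
  match c with
  | (j, .inl (b, t)) =>
      (2 * sv m t j) • prj d (⟨2*b.val, by have := b.isLt; omega⟩ : Fin d)
        - prj d (⟨2*b.val+1, by have := b.isLt; omega⟩ : Fin d)
  | (_, .inr i) => prj d (⟨2*(d/2), by have := i.isLt; omega⟩ : Fin d)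

/-- offset of a constraint -/
noncomputable def ca (c : Idx d m K) : ℝ :=
  match c with
  | (j, .inl (_, t)) => (sv m t j)^2
  | (j, .inr _) => -(j : ℝ)

noncomputable def Hs (c : Idx d m K) : Set (Fin d → ℝ) := {x | cf d m K c x ≤ ca d m K c}

lemma cf_ne_zero (c : Idx d m K) : cf d m K c ≠ 0 := by
  rcases c with ⟨j, w⟩
  rcases w with ⟨b, t⟩ | i
  · intro h
    have := DFunLike.congr_fun h
      (Pi.single (⟨2*b.val+1, by have := b.isLt; omega⟩ : Fin d) (1:ℝ))
    simp only [cf, LinearMap.sub_apply, LinearMap.smul_apply, prj_apply,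
      LinearMap.zero_apply, smul_eq_mul] at this
    rw [Pi.single_eq_of_ne (by simp [Fin.ext_iff]), Pi.single_eq_same] at this
    norm_num at this
  · intro h
    have := DFunLike.congr_fun h
      (Pi.single (⟨2*(d/2), by have := i.isLt; omega⟩ : Fin d) (1:ℝ))
    simp only [cf, prj_apply, LinearMap.zero_apply] at this
    rw [Pi.single_eq_same] at this
    norm_num at this

lemma isClosedHalfspace_Hs (c : Idx d m K) : IsClosedHalfspace (Fin d → ℝ) (Hs d m K c) :=
  ⟨cf d m K c, ca d m K c, cf_ne_zero d m K c, rfl⟩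

/-- color class polyhedron -/
noncomputable def Pj (c : Fin m) : Set (Fin d → ℝ) :=
  ⋂ i ∈ {i : Idx d m K | i.1 = c}, Hs d m K i

/-- tuples indexing candidate vertices -/
abbrev Tup := (Fin (d/2) → Fin m × Fin m × Fin K) × Fin ((d % 2) * (m-1) + 1)

noncomputable def s1v (τ : Tup d m K) (b : Fin (d/2)) : ℝ :=
  sv m ((τ.1 b).2.2 : ℕ) ((τ.1 b).1 : ℕ)
noncomputable def s2v (τ : Tup d m K) (b : Fin (d/2)) : ℝ :=
  sv m (((τ.1 b).2.2 : ℕ) + zz (τ.1 b).1 (τ.1 b).2.1) ((τ.1 b).2.1 : ℕ)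

noncomputable def pt (τ : Tup d m K) : Fin d → ℝ := fun i =>
  if h : (i:ℕ) < 2 * (d/2) then
    (if (i:ℕ) % 2 = 0 then (s1v d m K τ ⟨i/2, by omega⟩ + s2v d m K τ ⟨i/2, by omega⟩)/2
     else s1v d m K τ ⟨i/2, by omega⟩ * s2v d m K τ ⟨i/2, by omega⟩)
  else -((τ.2:ℕ) : ℝ)

def desig (τ : Tup d m K) : Set ℕ :=
  {c | (∃ b, c = ((τ.1 b).1 : ℕ) ∨ c = ((τ.1 b).2.1 : ℕ)) ∨ (d % 2 = 1 ∧ c = (τ.2 : ℕ))}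

def Good (τ : Tup d m K) : Prop :=
  (∀ b, ((τ.1 b).1 : ℕ) ≤ ((τ.1 b).2.1 : ℕ) ∧ ((τ.1 b).2.2 : ℕ) + 1 < K) ∧
  (∀ b, ∀ c ∈ desig d m K τ,
     (c ≤ ((τ.1 b).1:ℕ) ∨ ((τ.1 b).2.1:ℕ) ≤ c) ∧
       ((τ.1 b).1 = (τ.1 b).2.1 → c = ((τ.1 b).1:ℕ))) ∧
  (d % 2 = 1 → ∀ b, ((τ.1 b).2.1 : ℕ) ≤ (τ.2 : ℕ))

lemma pt_even (τ : Tup d m K) (i : Fin d) (b : Fin (d/2)) (h1 : (i:ℕ) = 2*(b:ℕ)) :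
    pt d m K τ i = (s1v d m K τ b + s2v d m K τ b)/2 := by
  have hlt : (i:ℕ) < 2*(d/2) := by have := b.isLt; omega
  have hb : (⟨(i:ℕ)/2, by omega⟩ : Fin (d/2)) = b := by apply Fin.ext; simp; omega
  simp only [pt, dif_pos hlt, if_pos (by omega : (i:ℕ) % 2 = 0), hb]

lemma pt_odd (τ : Tup d m K) (i : Fin d) (b : Fin (d/2)) (h1 : (i:ℕ) = 2*(b:ℕ)+1) :
    pt d m K τ i = s1v d m K τ b * s2v d m K τ b := by
  have hlt : (i:ℕ) < 2*(d/2) := by have := b.isLt; omega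
  have hb : (⟨(i:ℕ)/2, by omega⟩ : Fin (d/2)) = b := by apply Fin.ext; simp; omega
  simp only [pt, dif_pos hlt, if_neg (by omega : ¬ ((i:ℕ) % 2 = 0)), hb]

lemma pt_last (τ : Tup d m K) (i : Fin d) (h1 : ¬ ((i:ℕ) < 2*(d/2))) :
    pt d m K τ i = -((τ.2:ℕ) : ℝ) := by
  simp only [pt, dif_neg h1]

lemma cf_inl_apply (j : Fin m) (b : Fin (d/2)) (t : Fin K) (x : Fin d → ℝ) :
    cf d m K (j, .inl (b, t)) x
      = 2 * sv m t j * x ⟨2*b.val, by have := b.isLt; omega⟩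
        - x ⟨2*b.val+1, by have := b.isLt; omega⟩ := by
  simp [cf, LinearMap.sub_apply, LinearMap.smul_apply, prj_apply, smul_eq_mul]

lemma cf_inr_apply (j : Fin m) (i : Fin (d % 2)) (x : Fin d → ℝ) :
    cf d m K (j, .inr i) x = x ⟨2*(d/2), by have := i.isLt; omega⟩ := by
  simp [cf, prj_apply]

/-- Membership of the candidate point in designated polyhedra. -/
lemma pt_mem_Pj (hm : 1 ≤ m) (τ : Tup d m K) (hg : Good d m K τ) (c : Fin m)
    (hc : (c:ℕ) ∈ desig d m K τ) :
    pt d m K τ ∈ Pj d m K c := by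
  apply Set.mem_iInter₂.2
  rintro ⟨j', w⟩ (hj' : j' = c)
  subst hj'
  rcases w with ⟨b, u⟩ | i
  · show cf d m K (j', .inl (b,u)) (pt d m K τ) ≤ ca d m K (j', .inl (b,u))
    rw [cf_inl_apply]
    rw [pt_even d m K τ _ b (by simp), pt_odd d m K τ _ b (by simp)]
    obtain ⟨hok, hdeg⟩ := hg.2.1 b _ hc
    have hjk := (hg.1 b).1
    have hcore := core_ineq hm (τ.1 b).1 (τ.1 b).2.1 j' ((τ.1 b).2.2 : ℕ) (u:ℕ) hjk hok
      (fun h => Fin.ext (hdeg h))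
    show _ ≤ (sv m u j')^2
    unfold s1v s2v
    nlinarith [hcore]
  · show cf d m K (j', .inr i) (pt d m K τ) ≤ ca d m K (j', .inr i)
    rw [cf_inr_apply]
    rw [pt_last d m K τ _ (by simp)]
    show -((τ.2:ℕ) : ℝ) ≤ -(j':ℝ)
    have hodd : d % 2 = 1 := by have := i.isLt; omega
    have h3 := hg.2.2 hodd
    have hcle : (j':ℕ) ≤ (τ.2:ℕ) := by
      rcases hc with ⟨b, h | h⟩ | ⟨_, h⟩
      · exact h ▸ le_trans (hg.1 b).1 (h3 b)
      · exact h ▸ h3 b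
      · omega
    have : ((j':ℕ):ℝ) ≤ ((τ.2:ℕ):ℝ) := by exact_mod_cast hcle
    linarith

lemma sv_lt_sv (hm : 1 ≤ m) (τ : Tup d m K) (b : Fin (d/2))
    (hjk : ((τ.1 b).1 : ℕ) ≤ ((τ.1 b).2.1 : ℕ)) :
    sv m ((τ.1 b).2.2 : ℕ) ((τ.1 b).1 : ℕ)
      < sv m (((τ.1 b).2.2 : ℕ) + zz (τ.1 b).1 (τ.1 b).2.1) ((τ.1 b).2.1 : ℕ) := by
  unfold sv zz
  by_cases h : (τ.1 b).1 = (τ.1 b).2.1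
  · rw [if_pos h, h]
    push_cast
    linarith
  · rw [if_neg h]
    have hlt : ((τ.1 b).1:ℕ) < ((τ.1 b).2.1:ℕ) := lt_of_le_of_ne hjk (fun hh => h (Fin.ext hh))
    have h2 : (((τ.1 b).1:ℕ):ℝ) < (((τ.1 b).2.1:ℕ):ℝ) := by exact_mod_cast hlt
    have he := eps_pos hm
    push_cast
    nlinarith

lemma pt_vertex (hd : 1 ≤ d) (hm : 1 ≤ m) (τ : Tup d m K) (hg : Good d m K τ) :
    IsSubdivVertex (Pj d m K) (pt d m K τ) := by
  classical
  have hne : Nonempty ((Fin (d/2) × Bool) ⊕ Fin (d % 2)) := by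
    rcases Nat.lt_or_ge (d/2) 1 with h | h
    · rcases Nat.eq_zero_or_pos (d % 2) with h2 | h2
      · exact ⟨Sum.inl (⟨0, by omega⟩, false)⟩
      · exact ⟨Sum.inr ⟨0, by omega⟩⟩
    · exact ⟨Sum.inl (⟨0, by omega⟩, false)⟩
  have hm2 : (τ.2 : ℕ) < m := by
    have ht := τ.2.isLt
    have h4 : d % 2 * (m-1) ≤ m - 1 := by
      have h5 : d % 2 ≤ 1 := by omega
      calc d % 2 * (m-1) ≤ 1*(m-1) := Nat.mul_le_mul_right _ h5
        _ = m - 1 := one_mul _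
    omega
  set Fc : ((Fin (d/2) × Bool) ⊕ Fin (d % 2)) → Idx d m K := fun l =>
    match l with
    | .inl (b, false) => ((τ.1 b).1, .inl (b, (τ.1 b).2.2))
    | .inl (b, true) => ((τ.1 b).2.1, .inl (b,
        ⟨((τ.1 b).2.2:ℕ) + zz (τ.1 b).1 (τ.1 b).2.1, by
          have := (hg.1 b).2; unfold zz; split <;> omega⟩))
    | .inr i => (⟨(τ.2:ℕ), hm2⟩, .inr i) with hFc
  apply isSubdivVertex_of_pinned (L := (Fin (d/2) × Bool) ⊕ Fin (d % 2))
    (fun l => cf d m K (Fc l)) (fun l => ca d m K (Fc l)) (fun l => (Fc l).1)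
  · exact fun l => cf_ne_zero d m K (Fc l)
  · -- membership
    intro l
    apply pt_mem_Pj d m K hm τ hg
    rcases l with ⟨b, bb⟩ | i
    · cases bb
      · exact Or.inl ⟨b, Or.inl rfl⟩
      · exact Or.inl ⟨b, Or.inr rfl⟩
    · have h3 : d % 2 = 1 := by have := i.isLt; omega
      exact Or.inr ⟨h3, rfl⟩
  · -- subset
    intro l
    intro x hx
    exact Set.mem_iInter₂.1 hx (Fc l) rfl
  · -- tightness
    intro l
    rcases l with ⟨b, bb⟩ | i
    · cases bb
      · show cf d m K ((τ.1 b).1, .inl (b, (τ.1 b).2.2)) (pt d m K τ) = _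
        rw [cf_inl_apply, pt_even d m K τ _ b (by simp), pt_odd d m K τ _ b (by simp)]
        show _ = (sv m ((τ.1 b).2.2:ℕ) ((τ.1 b).1:ℕ))^2
        unfold s1v s2v
        ring
      · show cf d m K ((τ.1 b).2.1, .inl (b, _)) (pt d m K τ) = _
        rw [cf_inl_apply, pt_even d m K τ _ b (by simp), pt_odd d m K τ _ b (by simp)]
        show _ = (sv m (((τ.1 b).2.2:ℕ) + zz (τ.1 b).1 (τ.1 b).2.1) ((τ.1 b).2.1:ℕ))^2
        unfold s1v s2v
        ring
    · show cf d m K (_, .inr i) (pt d m K τ) = _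
      rw [cf_inr_apply, pt_last d m K τ _ (by simp)]
      rfl
  · -- uniqueness
    intro x hx
    funext i
    by_cases hi : (i:ℕ) < 2*(d/2)
    · set b : Fin (d/2) := ⟨(i:ℕ)/2, by omega⟩ with hb
      have e1 := hx (.inl (b, false))
      have e2 := hx (.inl (b, true))
      rw [cf_inl_apply] at e1 e2
      set s1 : ℝ := sv m ((τ.1 b).2.2 : ℕ) ((τ.1 b).1 : ℕ) with hs1
      set s2 : ℝ := sv m (((τ.1 b).2.2 : ℕ) + zz (τ.1 b).1 (τ.1 b).2.1) ((τ.1 b).2.1 : ℕ) with hs2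
      have he1 : 2 * s1 * x ⟨2*b.val, by have := b.isLt; omega⟩
          - x ⟨2*b.val+1, by have := b.isLt; omega⟩ = s1^2 := e1
      have he2 : 2 * s2 * x ⟨2*b.val, by have := b.isLt; omega⟩
          - x ⟨2*b.val+1, by have := b.isLt; omega⟩ = s2^2 := e2
      have hs12 : s1 < s2 := sv_lt_sv d m K hm τ b (hg.1 b).1
      set x1 : ℝ := x ⟨2*b.val, by have := b.isLt; omega⟩ with hx1d
      set x2 : ℝ := x ⟨2*b.val+1, by have := b.isLt; omega⟩ with hx2d
      have h3 : (s1 - s2) * (2*x1 - (s1+s2)) = 0 := by linear_combination he1 - he2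
      have hx1 : x1 = (s1+s2)/2 := by
        rcases mul_eq_zero.1 h3 with h | h
        · exfalso; linarith
        · linarith
      have hx2 : x2 = s1*s2 := by linear_combination 2*s1*hx1 - he1
      rcases Nat.even_or_odd (i:ℕ) with ⟨w, hw⟩ | ⟨w, hw⟩
      · have hieq : i = (⟨2*b.val, by have := b.isLt; omega⟩ : Fin d) := by
          apply Fin.ext; simp [hb]; omega
        rw [pt_even d m K τ i b (by simp [hb]; omega)]
        rw [hieq]
        unfold s1v s2v
        rw [← hs1, ← hs2, ← hx1d, hx1]
      · have hieq : i = (⟨2*b.val+1, by have := b.isLt; omega⟩ : Fin d) := by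
          apply Fin.ext; simp [hb]; omega
        rw [pt_odd d m K τ i b (by simp [hb]; omega)]
        rw [hieq]
        unfold s1v s2v
        rw [← hs1, ← hs2, ← hx2d, hx2]
    · have hil := i.isLt
      have h3 : d % 2 = 1 := by omega
      have e := hx (.inr ⟨0, by omega⟩)
      rw [cf_inr_apply] at e
      have hieq : i = (⟨2*(d/2), by omega⟩ : Fin d) := by apply Fin.ext; simp; omega
      rw [pt_last d m K τ i hi, hieq]
      exact e

lemma sv_inj (hm : 1 ≤ m) {t t' j j' : ℕ} (hj : j < m) (hj' : j' < m)
    (h : sv m t j = sv m t' j') : t = t' ∧ j = j' := by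
  have hb := eps_bound hm hj
  have hb' := eps_bound hm hj'
  unfold sv at h
  have htt : t = t' := by
    have h1 : (t:ℝ) < (t':ℝ) + 1 := by linarith
    have h2 : (t':ℝ) < (t:ℝ) + 1 := by linarith
    have h1' : t < t' + 1 := by exact_mod_cast h1
    have h2' : t' < t + 1 := by exact_mod_cast h2
    omega
  refine ⟨htt, ?_⟩
  subst htt
  have h3 : (j:ℝ) * eps m = (j':ℝ) * eps m := by linarith
  have h4 : (j:ℝ) = (j':ℝ) := mul_right_cancel₀ (ne_of_gt (eps_pos hm)) h3
  exact_mod_cast h4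

lemma quad_roots {s1 s2 u1 u2 : ℝ} (h1 : s1 ≤ s2) (h2 : u1 ≤ u2)
    (hsum : s1+s2 = u1+u2) (hprod : s1*s2 = u1*u2) : s1 = u1 ∧ s2 = u2 := by
  have h3 : (u1 - s1)*(u1 - s2) = 0 := by linear_combination hprod - u1 * hsum
  rcases mul_eq_zero.1 h3 with h | h
  · constructor
    · linarith [sub_eq_zero.1 h]
    · have := sub_eq_zero.1 h
      linarith
  · have h4 : u1 = s2 := by linarith [sub_eq_zero.1 h]
    have h5 : u2 = s1 := by linarith
    constructor <;> linarith

lemma pt_inj (hm : 1 ≤ m) (τ τ' : Tup d m K) (hg : Good d m K τ) (hg' : Good d m K τ')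
    (h : pt d m K τ = pt d m K τ') : τ = τ' := by
  have hblk : τ.1 = τ'.1 := by
    funext b
    have hx1 := congrFun h (⟨2*b.val, by have := b.isLt; omega⟩ : Fin d)
    have hx2 := congrFun h (⟨2*b.val+1, by have := b.isLt; omega⟩ : Fin d)
    rw [pt_even d m K τ _ b (by simp), pt_even d m K τ' _ b (by simp)] at hx1
    rw [pt_odd d m K τ _ b (by simp), pt_odd d m K τ' _ b (by simp)] at hx2
    have hs : s1v d m K τ b ≤ s2v d m K τ b := le_of_lt (by
      unfold s1v s2v; exact sv_lt_sv d m K hm τ b (hg.1 b).1)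
    have hs' : s1v d m K τ' b ≤ s2v d m K τ' b := le_of_lt (by
      unfold s1v s2v; exact sv_lt_sv d m K hm τ' b (hg'.1 b).1)
    have hsum : s1v d m K τ b + s2v d m K τ b = s1v d m K τ' b + s2v d m K τ' b := by
      have := hx1; field_simp at this; linarith
    have hq := quad_roots hs hs' hsum hx2
    obtain ⟨hq1, hq2⟩ := hq
    unfold s1v at hq1
    unfold s2v at hq2
    obtain ⟨ht, hj⟩ := sv_inj m hm (Fin.isLt _) (Fin.isLt _) hq1
    obtain ⟨htz, hk⟩ := sv_inj m hm (Fin.isLt _) (Fin.isLt _) hq2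
    have e1 : (τ.1 b).1 = (τ'.1 b).1 := Fin.ext hj
    have e2 : (τ.1 b).2.1 = (τ'.1 b).2.1 := Fin.ext hk
    have e3 : (τ.1 b).2.2 = (τ'.1 b).2.2 := Fin.ext ht
    ext
    · exact congrArg Fin.val e1
    · exact congrArg Fin.val e2
    · exact congrArg Fin.val e3
  have hsnd : τ.2 = τ'.2 := by
    rcases Nat.eq_zero_or_pos (d % 2) with h2 | h2
    · apply Fin.ext
      have e : d % 2 * (m-1) + 1 = 1 := by rw [h2]; simp
      have hlt : (τ.2:ℕ) < 1 := lt_of_lt_of_le τ.2.isLt (le_of_eq e)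
      have hlt' : (τ'.2:ℕ) < 1 := lt_of_lt_of_le τ'.2.isLt (le_of_eq e)
      omega
    · have hlast := congrFun h (⟨2*(d/2), by omega⟩ : Fin d)
      rw [pt_last d m K τ _ (by simp), pt_last d m K τ' _ (by simp)] at hlast
      apply Fin.ext
      have : ((τ.2:ℕ):ℝ) = ((τ'.2:ℕ):ℝ) := by linarith
      exact_mod_cast this
  exact Prod.ext hblk hsnd

section Count2

/-- fallback counting family -/
def psi2 (c : Fin m) (t : Fin (d/2) → Fin (K-1)) : Tup d m K :=
  (fun b => (c, c, Fin.castLE (by omega) (t b)),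
   ⟨(d % 2) * c.val, by
      have h6 : c.val ≤ m - 1 := by have := c.isLt; omega
      have h5 : d % 2 = 0 ∨ d % 2 = 1 := by omega
      rcases h5 with h5 | h5 <;> rw [h5] <;> simp <;> omega⟩)

end Count2

lemma desig_psi2 (c : Fin m) (t : Fin (d/2) → Fin (K-1)) :
    ∀ c' ∈ desig d m K (psi2 d m K c t), c' = c.val := by
  rintro c' (⟨b, h | h⟩ | ⟨ho, h⟩)
  · exact h
  · exact h
  · rw [h]
    show ((d % 2) * c.val : ℕ) = c.val
    rw [ho, one_mul]

lemma good_psi2 (c : Fin m) (t : Fin (d/2) → Fin (K-1)) :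
    Good d m K (psi2 d m K c t) := by
  refine ⟨fun b => ⟨le_refl _, ?_⟩, fun b c' hc' => ?_, fun ho b => ?_⟩
  · have := (t b).isLt
    show (t b).val + 1 < K
    omega
  · have hc'' := desig_psi2 d m K c t c' hc'
    subst hc''
    exact ⟨Or.inl (le_refl _), fun _ => rfl⟩
  · show c.val ≤ (d % 2) * c.val
    rw [ho, one_mul]

lemma psi2_inj (hd : 1 ≤ d) :
    Function.Injective (fun x : Fin m × (Fin (d/2) → Fin (K-1)) =>
      psi2 d m K x.1 x.2) := by
  rintro ⟨c, t⟩ ⟨c', t'⟩ h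
  simp only [psi2, Prod.mk.injEq] at h
  obtain ⟨h1, h2⟩ := h
  have hcc : c = c' := by
    rcases Nat.eq_zero_or_pos (d/2) with hB | hB
    · have ho : d % 2 = 1 := by omega
      have := congrArg Fin.val h2
      simp only at this
      apply Fin.ext
      rw [ho] at this
      omega
    · have := congrFun h1 ⟨0, hB⟩
      exact congrArg Prod.fst this
  subst hcc
  have ht : t = t' := by
    funext b
    have hB := congrFun h1 b
    have h3 := congrArg (fun p => p.2.2) hB
    simp only at h3
    exact Fin.castLE_injective _ h3
  rw [ht]

section Regime1

def hh : ℕ := if d % 2 = 1 then (m+1)/2 else m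

def Wd : ℕ := hh d m / (2 * (d/2))

def J0 : ℕ := if d % 2 = 1 then m - hh d m else 1

lemma hh_le : hh d m ≤ m := by
  unfold hh; split <;> omega

lemma twoBW_le : (2*(d/2)) * Wd d m ≤ hh d m := by
  unfold Wd; rw [Nat.mul_comm]; exact Nat.div_mul_le_self _ _

lemma win_lt (b : Fin (d/2)) {u : ℕ} (hu : u < 2 * Wd d m) :
    2 * b.val * Wd d m + u < hh d m := by
  have h1 : (b.val + 1) ≤ d/2 := b.isLt
  have h2 : (b.val + 1) * (2 * Wd d m) ≤ (d/2) * (2 * Wd d m) := Nat.mul_le_mul_right _ h1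
  have h3 : (d/2) * (2 * Wd d m) = (2*(d/2)) * Wd d m := by ring
  have h6 : (b.val+1) * (2*Wd d m) = 2*b.val*Wd d m + 2*Wd d m := by ring
  have h7 := twoBW_le d m
  have h0 : 2*b.val*Wd d m + u < 2*b.val*Wd d m + 2*Wd d m := Nat.add_lt_add_left hu _
  rw [← h6] at h0
  exact lt_of_lt_of_le h0 (le_trans h2 (le_trans (le_of_eq h3) h7))

lemma win_lt_m (b : Fin (d/2)) {u : ℕ} (hu : u < 2 * Wd d m) :
    2 * b.val * Wd d m + u < m := lt_of_lt_of_le (win_lt d m b hu) (hh_le d m)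

def psi1 (g : Fin (d/2) → Fin (Wd d m) × Fin (Wd d m) × Fin (K-1)) (z : Fin (J0 d m)) :
    Tup d m K :=
  (fun b => (⟨2*b.val*Wd d m + (g b).1.val, win_lt_m d m b (by have := (g b).1.isLt; omega)⟩,
             ⟨2*b.val*Wd d m + Wd d m + (g b).2.1.val, by
                have h := win_lt_m d m b (u := Wd d m + (g b).2.1.val)
                  (by have := (g b).2.1.isLt; omega)
                omega⟩,
             Fin.castLE (by omega) (g b).2.2),
   ⟨(d % 2) * (hh d m + z.val), by
      have h5 : d % 2 = 0 ∨ d % 2 = 1 := by omega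
      have hz : z.val < J0 d m := z.isLt
      rcases h5 with h5 | h5
      · rw [h5]; simp
      · have hJ : J0 d m = m - hh d m := by unfold J0; rw [if_pos h5]
        have hz' : z.val < m - hh d m := lt_of_lt_of_eq hz hJ
        rw [h5]
        have hb := hh_le d m
        omega⟩)

lemma good_psi1 (g : Fin (d/2) → Fin (Wd d m) × Fin (Wd d m) × Fin (K-1)) (z : Fin (J0 d m)) :
    Good d m K (psi1 d m K g z) := by
  have hstep : ∀ b1 b2 : ℕ, b1 ≤ b2 → 2*b1*Wd d m ≤ 2*b2*Wd d m := by
    intro b1 b2 hb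
    exact Nat.mul_le_mul_right _ (by omega)
  have hW : ∀ b : Fin (d/2), (g b).1.val < Wd d m := fun b => (g b).1.isLt
  -- the designated colors and their windows
  have hjval : ∀ b, (((psi1 d m K g z).1 b).1 : ℕ) = 2*b.val*Wd d m + (g b).1.val := fun b => rfl
  have hkval : ∀ b, (((psi1 d m K g z).1 b).2.1 : ℕ)
      = 2*b.val*Wd d m + Wd d m + (g b).2.1.val := fun b => rfl
  have hzval : (((psi1 d m K g z).2 : ℕ)) = (d % 2) * (hh d m + z.val) := rfl
  have hkb : ∀ b, (((psi1 d m K g z).1 b).2.1 : ℕ) < 2*(b.val+1)*Wd d m := by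
    intro b
    rw [hkval b]
    have := (g b).2.1.isLt
    have he : 2*(b.val+1)*Wd d m = 2*b.val*Wd d m + 2*Wd d m := by ring
    omega
  have hjb : ∀ b, 2*b.val*Wd d m ≤ (((psi1 d m K g z).1 b).1 : ℕ) := by
    intro b; rw [hjval b]; omega
  have hhk : ∀ b, (((psi1 d m K g z).1 b).2.1 : ℕ) < hh d m := by
    intro b
    have h2 : 2*(b.val+1)*Wd d m ≤ (2*(d/2))*Wd d m := by
      have : (b.val+1) * (2 * Wd d m) ≤ (d/2) * (2*Wd d m) := Nat.mul_le_mul_right _ b.isLt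
      calc 2*(b.val+1)*Wd d m = (b.val+1)*(2*Wd d m) := by ring
        _ ≤ (d/2)*(2*Wd d m) := this
        _ = (2*(d/2))*Wd d m := by ring
    exact lt_of_lt_of_le (hkb b) (le_trans h2 (twoBW_le d m))
  have hjk : ∀ b, (((psi1 d m K g z).1 b).1 : ℕ) < (((psi1 d m K g z).1 b).2.1 : ℕ) := by
    intro b
    rw [hjval b, hkval b]
    have := (g b).1.isLt
    omega
  refine ⟨fun b => ⟨le_of_lt (hjk b), ?_⟩, fun b c' hc' => ?_, fun ho b => ?_⟩
  · show ((g b).2.2).val + 1 < K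
    have := (g b).2.2.isLt
    omega
  · constructor
    · -- interval avoidance
      rcases hc' with ⟨b', h | h⟩ | ⟨ho, h⟩
      · -- c' = j_{b'}
        rcases lt_trichotomy b'.val b.val with hb | hb | hb
        · left
          rw [h, hjval b']
          have h1 : 2*b'.val*Wd d m + (g b').1.val < 2*(b'.val+1)*Wd d m := by
            have := (g b').1.isLt
            have he : 2*(b'.val+1)*Wd d m = 2*b'.val*Wd d m + 2*Wd d m := by ring
            omega
          have h2 : 2*(b'.val+1)*Wd d m ≤ 2*b.val*Wd d m := hstep _ _ (by omega)
          have := hjb b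
          omega
        · left
          have hbb : b' = b := Fin.ext hb
          subst hbb
          rw [h]
        · right
          rw [h, hjval b']
          have h2 : 2*(b.val+1)*Wd d m ≤ 2*b'.val*Wd d m := hstep _ _ (by omega)
          have := hkb b
          omega
      · -- c' = k_{b'}
        rcases lt_trichotomy b'.val b.val with hb | hb | hb
        · left
          rw [h, hkval b']
          have h1 : 2*b'.val*Wd d m + Wd d m + (g b').2.1.val < 2*(b'.val+1)*Wd d m := by
            have := (g b').2.1.isLt
            have he : 2*(b'.val+1)*Wd d m = 2*b'.val*Wd d m + 2*Wd d m := by ring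
            omega
          have h2 : 2*(b'.val+1)*Wd d m ≤ 2*b.val*Wd d m := hstep _ _ (by omega)
          have := hjb b
          omega
        · right
          have hbb : b' = b := Fin.ext hb
          subst hbb
          rw [h]
        · right
          rw [h, hkval b']
          have h2 : 2*(b.val+1)*Wd d m ≤ 2*b'.val*Wd d m := hstep _ _ (by omega)
          have := hkb b
          omega
      · -- c' = j0
        right
        have honem : ∀ q zv : ℕ, q = 1 → q * (hh d m + zv) = hh d m + zv := by
          intro q zv hq; rw [hq, one_mul]
        rw [h, hzval]
        calc (((psi1 d m K g z).1 b).2.1 : ℕ) ≤ hh d m := le_of_lt (hhk b)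
          _ ≤ hh d m + (z:ℕ) := Nat.le_add_right _ _
          _ = d % 2 * (hh d m + (z:ℕ)) := (honem _ _ ho).symm
    · -- degenerate case impossible
      intro he
      exfalso
      have := congrArg Fin.val he
      rw [hjval b, hkval b] at this
      have := (g b).1.isLt
      omega
  · -- Good3
    have honem : ∀ q zv : ℕ, q = 1 → q * (hh d m + zv) = hh d m + zv := by
      intro q zv hq; rw [hq, one_mul]
    rw [hzval]
    calc (((psi1 d m K g z).1 b).2.1 : ℕ) ≤ hh d m := le_of_lt (hhk b)
      _ ≤ hh d m + (z:ℕ) := Nat.le_add_right _ _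
      _ = d % 2 * (hh d m + (z:ℕ)) := (honem _ _ ho).symm

lemma psi1_inj :
    Function.Injective (fun x : (Fin (d/2) → Fin (Wd d m) × Fin (Wd d m) × Fin (K-1)) × Fin (J0 d m) =>
      psi1 d m K x.1 x.2) := by
  rintro ⟨g, z⟩ ⟨g', z'⟩ h
  simp only [psi1, Prod.mk.injEq] at h
  obtain ⟨h1, h2⟩ := h
  simp only [Prod.mk.injEq]
  constructor
  · funext b
    have hb := congrFun h1 b
    have e1 := congrArg (fun p => (p.1 : ℕ)) hb
    have e2 := congrArg (fun p => (p.2.1 : ℕ)) hb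
    have e3 := congrArg (fun p => p.2.2) hb
    simp only at e1 e2 e3
    refine Prod.ext (Fin.ext ?_) (Prod.ext (Fin.ext ?_) ?_)
    · have : (2*b.val*Wd d m + ((g b).1 : ℕ)) = 2*b.val*Wd d m + ((g' b).1 : ℕ) := e1
      omega
    · have : (2*b.val*Wd d m + Wd d m + ((g b).2.1 : ℕ))
          = 2*b.val*Wd d m + Wd d m + ((g' b).2.1 : ℕ) := e2
      omega
    · exact Fin.castLE_injective _ e3
  · have e4 := congrArg (fun p : Fin (d % 2 * (m-1) + 1) => (p : ℕ)) h2
    simp only at e4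
    have e5 : d % 2 * (hh d m + (z:ℕ)) = d % 2 * (hh d m + (z':ℕ)) := e4
    rcases Nat.eq_zero_or_pos (d % 2) with ho | ho
    · apply Fin.ext
      have hJ : J0 d m = 1 := by unfold J0; rw [if_neg (by omega)]
      have hz1 : (z:ℕ) < 1 := lt_of_lt_of_eq z.isLt hJ
      have hz2 : (z':ℕ) < 1 := lt_of_lt_of_eq z'.isLt hJ
      omega
    · have ho1 : d % 2 = 1 := by omega
      have honem : ∀ q a b : ℕ, q = 1 → q * a = q * b → a = b := by
        intro q a b hq hab; rw [hq, one_mul, one_mul] at hab; exact hab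
      have := honem _ _ _ ho1 e5
      apply Fin.ext
      omega

end Regime1

section Assembly

lemma card_Idx : Fintype.card (Idx d m K) = m * ((d/2)*K + d % 2) := by
  simp [Fintype.card_prod, Fintype.card_sum, Fintype.card_fin, Nat.mul_comm]

lemma N_le_n (hd : 1 ≤ d) (hm : 1 ≤ m) {n : ℕ} (hn : 2*d*m ≤ n) :
    Fintype.card (Idx d m (n/(d*m))) ≤ n := by
  rw [card_Idx]
  set K := n/(d*m) with hK
  set A := m*((d/2)*K) with hA
  have h2A : 2*A ≤ n := by
    have h1 : 2*(d/2) ≤ d := by omega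
    calc 2*A = (2*(d/2))*(K*m) := by rw [hA]; ring
      _ ≤ d*(K*m) := Nat.mul_le_mul_right _ h1
      _ = (n/(d*m))*(d*m) := by rw [hK]; ring
      _ ≤ n := Nat.div_mul_le_self n (d*m)
  have h2m : 2*m ≤ n := by
    have : 2*m ≤ 2*d*m := by
      have := Nat.mul_le_mul_right m (show 2 ≤ 2*d by omega)
      calc 2*m ≤ (2*d)*m := this
        _ = 2*d*m := by ring
    omega
  have he : m * ((d/2)*K + d % 2) = A + m*(d%2) := by rw [hA]; ring
  have hb : m*(d%2) ≤ m := by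
    calc m*(d%2) ≤ m*1 := Nat.mul_le_mul_left _ (by omega)
      _ = m := by ring
  rw [he]
  omega

end Assembly

end SLB

open SLB

theorem subdivision_vertices_lower_bound (d : ℕ) (hd : 1 ≤ d) :
    ∃ c : ℝ, 0 < c ∧
      ∀ (n m : ℕ), 1 ≤ m → 2 * d * m ≤ n →
        ∃ (N : ℕ), N ≤ n ∧
          ∃ (H : Fin N → Set (Fin d → ℝ)) (color : Fin N → Fin m),
            (∀ i, IsClosedHalfspace (Fin d → ℝ) (H i)) ∧
            c * (m : ℝ) ^ ((d + 1) / 2) * (n : ℝ) ^ (d / 2)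
              ≤ ({p | IsSubdivVertex (fun j : Fin m => ⋂ i ∈ {i | color i = j}, H i) p}.ncard : ℝ) := by
  classical
  have hdR : (0:ℝ) < (d:ℝ) := by exact_mod_cast hd
  refine ⟨1 / (4*(2^30*(d:ℝ)^6)^d), by positivity, ?_⟩
  intro n m hm hn
  set K := n / (d*m) with hKdef
  set N := Fintype.card (Idx d m K) with hNdef
  refine ⟨N, by rw [hNdef, hKdef]; exact N_le_n d m hd hm hn, ?_⟩
  set e : Fin N ≃ Idx d m K := (Fintype.equivFin (Idx d m K)).symm with hedef
  refine ⟨fun i => Hs d m K (e i), fun i => (e i).1, fun i => isClosedHalfspace_Hs d m K (e i), ?_⟩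
  -- identify the induced polyhedra with Pj
  have hPeq : (fun j : Fin m => ⋂ i ∈ {i | (e i).1 = j}, Hs d m K (e i)) = Pj d m K := by
    funext j
    ext x
    simp only [Set.mem_iInter, Set.mem_setOf_eq, Pj]
    constructor
    · intro hx c hc
      have h1 := hx (e.symm c)
      rw [Equiv.apply_symm_apply] at h1
      exact h1 hc
    · intro hx i hi
      exact hx (e i) hi
  set V : Set (Fin d → ℝ) :=
    {p | IsSubdivVertex (fun j : Fin m => ⋂ i ∈ {i | (e i).1 = j}, Hs d m K (e i)) p} with hV
  have hVfin : V.Finite := by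
    exact subdivVertex_finite (fun i => cf d m K (e i)) (fun i => ca d m K (e i))
      (fun i => (e i).1)
  have hVsub : ∀ τ : Tup d m K, Good d m K τ → pt d m K τ ∈ V := by
    intro τ hg
    show IsSubdivVertex _ _
    rw [hPeq]
    exact pt_vertex d m K hd hm τ hg
  -- basic numeric facts
  have hdm : 0 < d*m := Nat.mul_pos (by omega) hm
  have hK2 : 2 ≤ K := by
    rw [hKdef]
    rw [Nat.le_div_iff_mul_le hdm]
    calc 2*(d*m) = 2*d*m := by ring
      _ ≤ n := hn
  have hKt1 : 1 ≤ K - 1 := by omega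
  have hsplit := Nat.div_add_mod n (d*m)
  have hmod : n % (d*m) < d*m := Nat.mod_lt n hdm
  have hKtR : ((K-1 : ℕ) : ℝ) = (K:ℝ) - 1 := by
    push_cast [Nat.cast_sub (by omega : 1 ≤ K)]; ring
  have hKtpos : (1:ℝ) ≤ ((K-1 : ℕ) : ℝ) := by exact_mod_cast hKt1
  have hKb : (n:ℝ) ≤ 4*(d:ℝ)*(m:ℝ)*((K-1 : ℕ):ℝ) := by
    have h1 : ((d*m)*K + n % (d*m) : ℕ) = (n:ℕ) := hsplit
    have h2 : ((d:ℝ)*(m:ℝ))*(K:ℝ) + ((n % (d*m) : ℕ):ℝ) = (n:ℝ) := by exact_mod_cast h1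
    have h3 : ((n % (d*m) : ℕ):ℝ) < (d:ℝ)*(m:ℝ) := by exact_mod_cast hmod
    have h4 : (1:ℝ) ≤ (m:ℝ) := by exact_mod_cast hm
    have h5 : (1:ℝ) ≤ (d:ℝ) := by exact_mod_cast hd
    rw [hKtR]
    nlinarith [hKtR ▸ hKtpos]
  have hmR : (1:ℝ) ≤ (m:ℝ) := by exact_mod_cast hm
  have hdR1 : (1:ℝ) ≤ (d:ℝ) := by exact_mod_cast hd
  -- counting principle
  have key : ∀ (α : Type) (_ : Fintype α) (φ : α → Tup d m K),
      Function.Injective φ → (∀ a, Good d m K (φ a)) →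
      (Fintype.card α : ℝ) ≤ (V.ncard : ℝ) := by
    intro α ft φ hinj hgood
    have hinj2 : Function.Injective (fun a => pt d m K (φ a)) := by
      intro a b hab
      exact hinj (pt_inj d m K hm _ _ (hgood a) (hgood b) hab)
    have hsub : Set.range (fun a => pt d m K (φ a)) ⊆ V := by
      rintro _ ⟨a, rfl⟩
      exact hVsub _ (hgood a)
    have h1 : (Set.range (fun a => pt d m K (φ a))).ncard = Fintype.card α := by
      rw [← Set.image_univ, Set.ncard_image_of_injOn (Function.Injective.injOn hinj2)]
      simp [Set.ncard_univ, Nat.card_eq_fintype_card]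
    have h2 := Set.ncard_le_ncard hsub hVfin
    rw [h1] at h2
    exact_mod_cast h2
  have hd6 : (1:ℝ) ≤ (d:ℝ)^6 := by
    calc (1:ℝ) = 1^6 := by norm_num
      _ ≤ (d:ℝ)^6 := pow_le_pow_left₀ (by norm_num) hdR1 6
  have hbase : (1:ℝ) ≤ 2^30*(d:ℝ)^6 := by nlinarith
  have h36 : (d:ℝ)^3 ≤ (d:ℝ)^6 := pow_le_pow_right₀ hdR1 (by norm_num)
  have hexp : (d+1)/2 = d/2 + d % 2 := by omega
  rw [hexp, pow_add]
  by_cases hreg : 1 ≤ d/2 ∧ 16*d ≤ m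
  · -- regime 1: many colors
    obtain ⟨hB1, hm16⟩ := hreg
    have hcard := key ((Fin (d/2) → Fin (Wd d m) × Fin (Wd d m) × Fin (K-1)) × Fin (J0 d m)) inferInstance
      (fun x => psi1 d m K x.1 x.2) (psi1_inj d m K) (fun x => good_psi1 d m K x.1 x.2)
    have hcardeq : Fintype.card ((Fin (d/2) → Fin (Wd d m) × Fin (Wd d m) × Fin (K-1)) × Fin (J0 d m))
        = (Wd d m * (Wd d m * (K-1)))^(d/2) * J0 d m := by
      simp [Fintype.card_prod, Fintype.card_fun, Fintype.card_fin]
    rw [hcardeq] at hcard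
    -- real bounds
    have hh2 : m ≤ 2 * hh d m := by unfold hh; split <;> omega
    have h2B : 0 < 2*(d/2) := by omega
    have hhsplit := Nat.div_add_mod (hh d m) (2*(d/2))
    have hhmod : hh d m % (2*(d/2)) < 2*(d/2) := Nat.mod_lt _ h2B
    have hW1 : 1 ≤ Wd d m := by
      have h8d : 8*d ≤ hh d m := by omega
      have h2Bd : 2*(d/2) ≤ d := by omega
      rw [show Wd d m = hh d m / (2*(d/2)) from rfl]
      rw [Nat.le_div_iff_mul_le h2B]
      omega
    have hWb : (m:ℝ) ≤ 8*(d:ℝ)*((Wd d m : ℕ):ℝ) := by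
      have e1 : ((2*(d/2))*(Wd d m) + hh d m % (2*(d/2)) : ℕ) = hh d m := hhsplit
      have e2 : ((2*(d/2) : ℕ):ℝ)*((Wd d m : ℕ):ℝ) + ((hh d m % (2*(d/2)) : ℕ):ℝ)
          = ((hh d m : ℕ):ℝ) := by exact_mod_cast e1
      have e3 : ((hh d m % (2*(d/2)) : ℕ):ℝ) < ((2*(d/2) : ℕ):ℝ) := by exact_mod_cast hhmod
      have e4 : (m:ℝ) ≤ 2*((hh d m : ℕ):ℝ) := by exact_mod_cast hh2
      have e5 : ((2*(d/2) : ℕ):ℝ) ≤ (d:ℝ) := by exact_mod_cast (show 2*(d/2) ≤ d by omega)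
      have e6 : (1:ℝ) ≤ ((Wd d m : ℕ):ℝ) := by exact_mod_cast hW1
      have e7 : (0:ℝ) ≤ ((2*(d/2) : ℕ):ℝ) := by positivity
      nlinarith [mul_le_mul_of_nonneg_right e5 (by linarith : (0:ℝ) ≤ ((Wd d m : ℕ):ℝ))]
    have hJb : (m:ℝ)^(d % 2) ≤ 4^(d % 2) * ((J0 d m : ℕ):ℝ) := by
      have h5 : d % 2 = 0 ∨ d % 2 = 1 := by omega
      rcases h5 with h5 | h5
      · rw [h5]
        have : J0 d m = 1 := by unfold J0; rw [if_neg (by omega)]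
        rw [this]
        norm_num
      · rw [h5]
        have hJ : J0 d m = m - (m+1)/2 := by
          unfold J0 hh; rw [if_pos h5, if_pos h5]
        have h6 : m ≤ 4 * J0 d m := by rw [hJ]; omega
        have h7 : (m:ℝ) ≤ 4*((J0 d m : ℕ):ℝ) := by exact_mod_cast h6
        simpa using h7
    -- combine
    set W : ℝ := ((Wd d m : ℕ):ℝ) with hWdef
    set Kt : ℝ := ((K-1 : ℕ):ℝ) with hKtdef
    set J : ℝ := ((J0 d m : ℕ):ℝ) with hJdef
    have hW0 : (0:ℝ) ≤ W := by positivity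
    have hKt0 : (0:ℝ) ≤ Kt := by positivity
    have hJ0 : (0:ℝ) ≤ J := by positivity
    have hnb : (n:ℝ) ≤ 32*(d:ℝ)^2*W*Kt := by
      nlinarith [mul_le_mul_of_nonneg_left hWb (show (0:ℝ) ≤ 4*(d:ℝ)*Kt by positivity)]
    have hm8 : (m:ℝ)^(d/2) ≤ (8*(d:ℝ)*W)^(d/2) :=
      pow_le_pow_left₀ (by positivity) hWb _
    have hn32 : (n:ℝ)^(d/2) ≤ (32*(d:ℝ)^2*W*Kt)^(d/2) :=
      pow_le_pow_left₀ (by positivity) hnb _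
    have hrhs : ((((Wd d m * (Wd d m * (K-1)))^(d/2) * J0 d m : ℕ)):ℝ)
        = (W*(W*Kt))^(d/2) * J := by push_cast; ring
    have hconst : (1 / (4*(2^30*(d:ℝ)^6)^d)) * ((8*(d:ℝ))^(d/2) * (32*(d:ℝ)^2)^(d/2) * 4^(d % 2)) ≤ 1 := by
      rw [div_mul_eq_mul_div, one_mul, div_le_one (by positivity)]
      have g1 : (8*(d:ℝ))^(d/2) * (32*(d:ℝ)^2)^(d/2) = (256*(d:ℝ)^3)^(d/2) := by
        rw [← mul_pow]; ring_nf
      rw [g1]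
      have g2 : (256*(d:ℝ)^3)^(d/2) ≤ (2^30*(d:ℝ)^6)^d := by
        calc (256*(d:ℝ)^3)^(d/2) ≤ (2^30*(d:ℝ)^6)^(d/2) := by
              apply pow_le_pow_left₀ (by positivity)
              nlinarith [h36]
          _ ≤ (2^30*(d:ℝ)^6)^d := by
              apply pow_le_pow_right₀ hbase
              omega
      have g3 : (4:ℝ)^(d%2) ≤ 4 := by
        rcases (show d % 2 = 0 ∨ d % 2 = 1 by omega) with h | h <;> rw [h] <;> norm_num
      calc (256*(d:ℝ)^3)^(d/2) * 4^(d%2) ≤ (2^30*(d:ℝ)^6)^d * 4 := by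
            apply mul_le_mul g2 g3 (by positivity) (by positivity)
        _ = 4*(2^30*(d:ℝ)^6)^d := by ring
    calc (1 / (4*(2^30*(d:ℝ)^6)^d)) * ((m:ℝ)^(d/2) * (m:ℝ)^(d%2)) * (n:ℝ)^(d/2)
        ≤ (1 / (4*(2^30*(d:ℝ)^6)^d)) * ((8*(d:ℝ)*W)^(d/2) * (4^(d%2) * J)) * (32*(d:ℝ)^2*W*Kt)^(d/2) := by
          apply mul_le_mul _ hn32 (by positivity) (by positivity)
          apply mul_le_mul_of_nonneg_left _ (by positivity)
          exact mul_le_mul hm8 hJb (by positivity) (by positivity)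
      _ = ((1 / (4*(2^30*(d:ℝ)^6)^d)) * ((8*(d:ℝ))^(d/2) * (32*(d:ℝ)^2)^(d/2) * 4^(d % 2)))
            * ((W*(W*Kt))^(d/2) * J) := by
          rw [mul_pow, mul_pow, mul_pow, mul_pow]
          ring
      _ ≤ 1 * ((W*(W*Kt))^(d/2) * J) := by
          apply mul_le_mul_of_nonneg_right hconst (by positivity)
      _ = (W*(W*Kt))^(d/2) * J := by ring
      _ = ((((Wd d m * (Wd d m * (K-1)))^(d/2) * J0 d m : ℕ)):ℝ) := hrhs.symm
      _ ≤ (V.ncard : ℝ) := hcard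
  · -- regime 2
    have hcard := key (Fin m × (Fin (d/2) → Fin (K-1))) inferInstance
      (fun x => psi2 d m K x.1 x.2) (psi2_inj d m K hd) (fun x => good_psi2 d m K x.1 x.2)
    have hcardeq : Fintype.card (Fin m × (Fin (d/2) → Fin (K-1))) = m * (K-1)^(d/2) := by
      simp [Fintype.card_prod, Fintype.card_fun, Fintype.card_fin]
    rw [hcardeq] at hcard
    have hrhs : ((m * (K-1)^(d/2) : ℕ):ℝ) = (m:ℝ) * ((K-1:ℕ):ℝ)^(d/2) := by push_cast; ring
    rw [hrhs] at hcard
    set Kt : ℝ := ((K-1 : ℕ):ℝ) with hKtdef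
    have hKt0 : (0:ℝ) ≤ Kt := by positivity
    have hcbound : (1 / (4*(2^30*(d:ℝ)^6)^d)) * ((16*(d:ℝ))^(d/2) * (64*(d:ℝ)^2)^(d/2)) ≤ 1 := by
      rw [div_mul_eq_mul_div, one_mul, div_le_one (by positivity)]
      have g1 : (16*(d:ℝ))^(d/2) * (64*(d:ℝ)^2)^(d/2) = (1024*(d:ℝ)^3)^(d/2) := by
        rw [← mul_pow]; ring_nf
      rw [g1]
      have g2 : (1024*(d:ℝ)^3)^(d/2) ≤ (2^30*(d:ℝ)^6)^d := by
        calc (1024*(d:ℝ)^3)^(d/2) ≤ (2^30*(d:ℝ)^6)^(d/2) := by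
              apply pow_le_pow_left₀ (by positivity)
              nlinarith [h36]
          _ ≤ (2^30*(d:ℝ)^6)^d := by
              apply pow_le_pow_right₀ hbase
              omega
      have g4 : (0:ℝ) ≤ (2^30*(d:ℝ)^6)^d := by positivity
      exact le_trans g2 (by linarith)
    by_cases hB0 : d/2 = 0
    · -- d = 1
      have hd1 : d = 1 := by omega
      rw [hB0]
      simp only [pow_zero, one_mul, mul_one]
      have ho1 : d % 2 = 1 := by omega
      rw [ho1, pow_one]
      have hc1 : (1 / (4*(2^30*(d:ℝ)^6)^d)) ≤ 1 := by
        rw [div_le_one (by positivity)]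
        nlinarith [one_le_pow₀ hbase (n := d)]
      calc (1 / (4*(2^30*(d:ℝ)^6)^d)) * (m:ℝ) ≤ 1 * (m:ℝ) := by
            apply mul_le_mul_of_nonneg_right hc1 (by positivity)
        _ = (m:ℝ) * Kt^(d/2) := by rw [hB0]; simp
        _ ≤ (V.ncard : ℝ) := hcard
    · -- 1 ≤ d/2 and m < 16 d
      have hB1 : 1 ≤ d/2 := by omega
      have hm16 : m < 16*d := by
        by_contra hcon
        exact hreg ⟨hB1, by omega⟩
      have hm16R : (m:ℝ) ≤ 16*(d:ℝ) := by
        have : m ≤ 16*d := le_of_lt hm16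
        exact_mod_cast this
      have hnK : (n:ℝ)^(d/2) ≤ ((4*(d:ℝ))*(m:ℝ)*Kt)^(d/2) :=
        pow_le_pow_left₀ (by positivity) hKb _
      have hmK : (m:ℝ)^(d/2) ≤ (16*(d:ℝ))^(d/2) := pow_le_pow_left₀ (by positivity) hm16R _
      -- m^(B+o) ≤ m * (16d)^(B+o-1) style, via case on o
      have hmB : (m:ℝ)^(d/2) * (m:ℝ)^(d%2) ≤ (16*(d:ℝ))^(d/2) * (m:ℝ) := by
        rcases (show d % 2 = 0 ∨ d % 2 = 1 by omega) with ho | ho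
        · rw [ho, pow_zero, mul_one]
          obtain ⟨B', hB'⟩ : ∃ B', d/2 = B' + 1 := ⟨d/2 - 1, by omega⟩
          rw [hB', pow_succ, pow_succ]
          have h1 : (m:ℝ)^B' ≤ (16*(d:ℝ))^B' := pow_le_pow_left₀ (by positivity) hm16R _
          have h2 : (m:ℝ)^B' * (m:ℝ) ≤ (16*(d:ℝ))^B' * (m:ℝ) :=
            mul_le_mul_of_nonneg_right h1 (by positivity)
          have h3 : (16*(d:ℝ))^B' * (m:ℝ) ≤ ((16*(d:ℝ))^B' * (16*(d:ℝ))) * (m:ℝ) := by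
            have h4 : (0:ℝ) ≤ (16*(d:ℝ))^B' := by positivity
            nlinarith [mul_nonneg (mul_nonneg h4 (by linarith : (0:ℝ) ≤ 16*(d:ℝ)-1))
              (by positivity : (0:ℝ) ≤ (m:ℝ))]
          linarith
        · rw [ho, pow_one]
          exact mul_le_mul_of_nonneg_right hmK (by positivity)
      have hn64 : (n:ℝ) ≤ 64*(d:ℝ)^2*Kt := by
        nlinarith [mul_le_mul_of_nonneg_left hm16R (show (0:ℝ) ≤ 4*(d:ℝ)*Kt by positivity)]
      have hn64B : (n:ℝ)^(d/2) ≤ (64*(d:ℝ)^2)^(d/2) * Kt^(d/2) := by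
        calc (n:ℝ)^(d/2) ≤ (64*(d:ℝ)^2*Kt)^(d/2) := pow_le_pow_left₀ (by positivity) hn64 _
          _ = (64*(d:ℝ)^2)^(d/2) * Kt^(d/2) := mul_pow _ _ _
      have hmain : (1 / (4*(2^30*(d:ℝ)^6)^d)) * ((m:ℝ)^(d/2) * (m:ℝ)^(d%2)) * (n:ℝ)^(d/2)
          ≤ (m:ℝ) * Kt^(d/2) := by
        calc (1 / (4*(2^30*(d:ℝ)^6)^d)) * ((m:ℝ)^(d/2) * (m:ℝ)^(d%2)) * (n:ℝ)^(d/2)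
            ≤ (1 / (4*(2^30*(d:ℝ)^6)^d)) * ((16*(d:ℝ))^(d/2) * (m:ℝ))
              * ((64*(d:ℝ)^2)^(d/2) * Kt^(d/2)) := by
              apply mul_le_mul _ hn64B (by positivity) (by positivity)
              exact mul_le_mul_of_nonneg_left hmB (by positivity)
          _ = ((1 / (4*(2^30*(d:ℝ)^6)^d)) * ((16*(d:ℝ))^(d/2) * (64*(d:ℝ)^2)^(d/2)))
              * ((m:ℝ) * Kt^(d/2)) := by ring
          _ ≤ 1 * ((m:ℝ) * Kt^(d/2)) := mul_le_mul_of_nonneg_right hcbound (by positivity)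
          _ = (m:ℝ) * Kt^(d/2) := one_mul _
      exact le_trans hmain hcard
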